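/- Exact commutator identity between multiplication by a coordinate and a Bessel potential: For every s ∈ ℝ, every ℓ ∈ {1,2} and every Schwartz function f on ℝ², one has the identity of functions on ℝ²: x_ℓ · (⟨D⟩^s f)(x) − (⟨D⟩^s (y ↦ y_ℓ f(y)))(x) = s · (⟨D⟩^{s−2} ∂_ℓ f)(x) for all x ∈ ℝ². -/

import Mathlib

open MeasureTheory Real Complex SchwartzMap
open scoped FourierTransform ENNReal RealInnerProductSpace

noncomputable section

/-- The plane `ℝ²`. -/
abbrev E2 : Type := EuclideanSpace ℝ (Fin 2)

/-- The Bessel potential operator `⟨D⟩^s f = ℱ⁻¹((1 + 4π²|ξ|²)^{s/2} ℱf)`. -/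
noncomputable def besselD (s : ℝ) (f : E2 → ℂ) : E2 → ℂ :=
  𝓕⁻ (fun ξ : E2 => (((1 + 4 * π ^ 2 * ‖ξ‖ ^ 2) ^ (s / 2) : ℝ) : ℂ) * 𝓕 f ξ)

/-- The partial derivative `∂_i` in the `i`-th coordinate direction. -/
noncomputable def pd (i : Fin 2) (f : E2 → ℂ) : E2 → ℂ :=
  fun x => fderiv ℝ f x (EuclideanSpace.single i 1)

/-- The `W^{1,p}(ℝ²)` norm `‖f‖_{L^p} + ‖∂₁f‖_{L^p} + ‖∂₂f‖_{L^p}`. -/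
noncomputable def W1pNorm (p : ℝ≥0∞) (f : E2 → ℂ) : ℝ≥0∞ :=
  eLpNorm f p volume + eLpNorm (pd 0 f) p volume + eLpNorm (pd 1 f) p volume

namespace CBC

/-- The Bessel multiplier. -/
def m (s : ℝ) (ξ : E2) : ℝ := (1 + 4 * π ^ 2 * ‖ξ‖ ^ 2) ^ (s / 2)

lemma one_le_base (ξ : E2) : (1 : ℝ) ≤ 1 + 4 * π ^ 2 * ‖ξ‖ ^ 2 := le_add_of_nonneg_right (by positivity)

lemma base_pos (ξ : E2) : (0 : ℝ) < 1 + 4 * π ^ 2 * ‖ξ‖ ^ 2 :=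
  lt_of_lt_of_le one_pos (one_le_base ξ)

lemma m_pos (s : ℝ) (ξ : E2) : 0 < m s ξ := rpow_pos_of_pos (base_pos ξ) _

lemma m_continuous (s : ℝ) : Continuous (m s) := by
  apply Continuous.rpow_const
  · continuity
  · intro ξ; exact Or.inl (ne_of_gt (base_pos ξ))

lemma m_hasFDerivAt (s : ℝ) (ξ : E2) :
    HasFDerivAt (m s) ((4 * π ^ 2 * s * m (s - 2) ξ) • innerSL ℝ ξ) ξ := by
  have hu : HasFDerivAt (fun ξ : E2 => 1 + 4 * π ^ 2 * ‖ξ‖ ^ 2)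
      ((4 * π ^ 2 * 2) • innerSL ℝ ξ) ξ := by
    have h1 : HasFDerivAt (fun ξ : E2 => ‖ξ‖ ^ 2) (2 • innerSL ℝ ξ) ξ := by
      simpa using (hasFDerivAt_id ξ).norm_sq
    have := (h1.const_mul (4 * π ^ 2)).const_add 1
    refine this.congr_fderiv ?_
    ext y
    simp [smul_smul]
    ring
  have hr : HasDerivAt (fun t : ℝ => t ^ (s / 2))
      ((s / 2) * (1 + 4 * π ^ 2 * ‖ξ‖ ^ 2) ^ (s / 2 - 1)) (1 + 4 * π ^ 2 * ‖ξ‖ ^ 2) :=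
    Real.hasDerivAt_rpow_const (Or.inl (ne_of_gt (base_pos ξ)))
  have := hr.comp_hasFDerivAt ξ hu
  refine this.congr_fderiv ?_
  ext y
  simp only [ContinuousLinearMap.coe_smul', Pi.smul_apply, smul_eq_mul, m]
  rw [show (s - 2) / 2 = s / 2 - 1 by ring]
  ring

lemma m_le (s : ℝ) (ξ : E2) :
    m s ξ ≤ (1 + 4 * π ^ 2) ^ (⌈s / 2⌉₊) * (1 + ‖ξ‖) ^ (2 * ⌈s / 2⌉₊) := by
  set k := ⌈s / 2⌉₊
  have h1 : m s ξ ≤ (1 + 4 * π ^ 2 * ‖ξ‖ ^ 2) ^ (k : ℝ) :=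
    rpow_le_rpow_of_exponent_le (one_le_base ξ) (Nat.le_ceil _)
  rw [rpow_natCast] at h1
  refine h1.trans ?_
  have h2 : (1 + 4 * π ^ 2 * ‖ξ‖ ^ 2) ≤ (1 + 4 * π ^ 2) * (1 + ‖ξ‖) ^ 2 := by
    nlinarith [sq_nonneg π, norm_nonneg ξ, sq_nonneg (1 + ‖ξ‖), sq_nonneg ‖ξ‖]
  calc (1 + 4 * π ^ 2 * ‖ξ‖ ^ 2) ^ k ≤ ((1 + 4 * π ^ 2) * (1 + ‖ξ‖) ^ 2) ^ k :=
        pow_le_pow_left₀ (le_of_lt (base_pos ξ)) h2 k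
    _ = (1 + 4 * π ^ 2) ^ k * (1 + ‖ξ‖) ^ (2 * k) := by
        rw [mul_pow, ← pow_mul]


variable {F : Type*} [NormedAddCommGroup F] [NormedSpace ℝ F]

lemma integrable_one_add_pow_mul (n : ℕ) (h : 𝓢(E2, F)) :
    Integrable (fun ξ : E2 => (1 + ‖ξ‖) ^ n * ‖h ξ‖) := by
  have he : (fun ξ : E2 => (1 + ‖ξ‖) ^ n * ‖h ξ‖)
      = fun ξ => ∑ i ∈ Finset.range (n + 1), ((n.choose i : ℝ) * (‖ξ‖ ^ i * ‖h ξ‖)) := by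
    funext ξ
    rw [add_comm (1 : ℝ), add_pow, Finset.sum_mul]
    refine Finset.sum_congr rfl fun i _ => ?_
    rw [one_pow]
    ring
  rw [he]
  exact integrable_finset_sum _ (fun i _ => ((h.integrable_pow_mul volume i).const_mul _))

lemma integrable_m_weight (s : ℝ) (j : ℕ) (h : 𝓢(E2, F)) :
    Integrable (fun ξ : E2 => m s ξ * ((1 + ‖ξ‖) ^ j * ‖h ξ‖)) := by
  set k := ⌈s / 2⌉₊ with hk
  refine ((integrable_one_add_pow_mul (2 * k + j) h).const_mul
    ((1 + 4 * π ^ 2) ^ k)).mono' ?_ ?_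
  · exact ((m_continuous s).mul ((((continuous_const.add continuous_norm).pow j)).mul
      h.continuous.norm)).aestronglyMeasurable
  · filter_upwards with ξ
    have h0 : (0:ℝ) ≤ (1 + ‖ξ‖) ^ j * ‖h ξ‖ := by positivity
    have : ‖m s ξ * ((1 + ‖ξ‖) ^ j * ‖h ξ‖)‖ = m s ξ * ((1 + ‖ξ‖) ^ j * ‖h ξ‖) := by
      rw [Real.norm_eq_abs, _root_.abs_of_nonneg (mul_nonneg (m_pos s ξ).le h0)]
    rw [this]
    calc m s ξ * ((1 + ‖ξ‖) ^ j * ‖h ξ‖)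
        ≤ ((1 + 4 * π ^ 2) ^ k * (1 + ‖ξ‖) ^ (2 * k)) * ((1 + ‖ξ‖) ^ j * ‖h ξ‖) :=
          mul_le_mul_of_nonneg_right (m_le s ξ) h0
      _ = (1 + 4 * π ^ 2) ^ k * ((1 + ‖ξ‖) ^ (2 * k + j) * ‖h ξ‖) := by
          rw [pow_add]; ring

lemma integrable_of_le {V : Type*} [NormedAddCommGroup V] (s : ℝ) (j : ℕ) (h : 𝓢(E2, F))
    (C : ℝ) {u : E2 → V} (hu : AEStronglyMeasurable u volume)
    (hb : ∀ ξ, ‖u ξ‖ ≤ C * (m s ξ * ((1 + ‖ξ‖) ^ j * ‖h ξ‖))) : Integrable u :=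
  ((integrable_m_weight s j h).const_mul C).mono' hu (Filter.Eventually.of_forall hb)


lemma inner_coord (ξ : E2) (ℓ : Fin 2) :
    (inner ℝ ξ (EuclideanSpace.single ℓ (1:ℝ) : E2) : ℝ) = ξ ℓ := by
  rw [EuclideanSpace.inner_single_right]; simp

lemma abs_coord_le (ξ : E2) (ℓ : Fin 2) : |ξ ℓ| ≤ ‖ξ‖ := by
  have h := abs_real_inner_le_norm ξ (EuclideanSpace.single ℓ (1:ℝ) : E2)
  rwa [inner_coord, EuclideanSpace.norm_single, norm_one, mul_one] at h

lemma F_add {h1 h2 : E2 → ℂ} (hi1 : Integrable h1) (hi2 : Integrable h2) (w : E2) :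
    𝓕 (fun v : E2 => h1 v + h2 v) w = 𝓕 h1 w + 𝓕 h2 w := by
  have : (𝓕 (fun v : E2 => h1 v + h2 v) w)
      = ∫ v : E2, (𝐞 (-(inner ℝ v w : ℝ)) • h1 v + 𝐞 (-(inner ℝ v w : ℝ)) • h2 v) := by
    rw [Real.fourier_eq]
    congr 1; funext v; rw [smul_add]
  rw [this, integral_add ((Real.fourierIntegral_convergent_iff w).2 hi1)
    ((Real.fourierIntegral_convergent_iff w).2 hi2), Real.fourier_eq,
    Real.fourier_eq]

lemma F_const_mul (c : ℂ) (h : E2 → ℂ) (w : E2) :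
    𝓕 (fun v : E2 => c * h v) w = c * 𝓕 h w := by
  rw [Real.fourier_eq, Real.fourier_eq, ← integral_const_mul]
  congr 1; funext v
  simp only [Circle.smul_def, smul_eq_mul]; ring

lemma integrable_fourierSMulRight (f : 𝓢(E2, ℂ)) :
    Integrable (VectorFourier.fourierSMulRight (innerSL ℝ) ⇑f) volume := by
  refine ((f.integrable_pow_mul volume 1).const_mul
    (2 * π * ‖(innerSL ℝ : E2 →L[ℝ] E2 →L[ℝ] ℝ)‖)).mono'
    (f.continuous.aestronglyMeasurable.fourierSMulRight) ?_
  filter_upwards with v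
  have h := VectorFourier.norm_fourierSMulRight_le (innerSL ℝ) (⇑f) v
  calc ‖VectorFourier.fourierSMulRight (innerSL ℝ) ⇑f v‖
      ≤ 2 * π * ‖(innerSL ℝ : E2 →L[ℝ] E2 →L[ℝ] ℝ)‖ * ‖v‖ * ‖f v‖ := h
    _ = 2 * π * ‖(innerSL ℝ : E2 →L[ℝ] E2 →L[ℝ] ℝ)‖ * (‖v‖ ^ 1 * ‖f v‖) := by ring

lemma fourier_coord (f : 𝓢(E2, ℂ)) (ℓ : Fin 2) (ξ : E2) :
    fderiv ℝ (𝓕 ⇑f) ξ (EuclideanSpace.single ℓ 1)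
      = (-(2 * π * Complex.I)) * 𝓕 (fun v => (v ℓ : ℂ) * f v) ξ := by
  rw [Real.fderiv_fourier f.integrable
    (by simpa using f.integrable_pow_mul volume 1),
    Real.fourier_continuousLinearMap_apply (integrable_fourierSMulRight f)]
  have he : (fun v : E2 =>
        VectorFourier.fourierSMulRight (innerSL ℝ) (⇑f) v (EuclideanSpace.single ℓ 1))
      = fun v : E2 => (-(2 * π * Complex.I)) * ((v ℓ : ℂ) * f v) := by
    funext v
    rw [VectorFourier.fourierSMulRight_apply, innerSL_apply_apply, inner_coord]
    rw [smul_eq_mul, Complex.real_smul]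
  rw [he, F_const_mul]

lemma integrable_fderiv_schwartz (f : 𝓢(E2, ℂ)) : Integrable (fderiv ℝ ⇑f) volume := by
  have h := (SchwartzMap.fderivCLM ℝ E2 ℂ f).integrable (μ := volume)
  have e : ⇑(SchwartzMap.fderivCLM ℝ E2 ℂ f) = fderiv ℝ ⇑f :=
    funext fun x => SchwartzMap.fderivCLM_apply ℝ f x
  rwa [e] at h

lemma fourier_pd (f : 𝓢(E2, ℂ)) (ℓ : Fin 2) (ξ : E2) :
    𝓕 (fun v : E2 => fderiv ℝ (⇑f) v (EuclideanSpace.single ℓ 1)) ξ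
      = (2 * π * Complex.I) * ((ξ ℓ : ℂ) * 𝓕 ⇑f ξ) := by
  rw [← Real.fourier_continuousLinearMap_apply (integrable_fderiv_schwartz f),
    Real.fourier_fderiv f.integrable f.differentiable (integrable_fderiv_schwartz f),
    VectorFourier.fourierSMulRight_apply]
  simp only [ContinuousLinearMap.neg_apply, innerSL_apply_apply]
  rw [show (innerSL ℝ) ξ (EuclideanSpace.single ℓ 1) = ξ ℓ from inner_coord ξ ℓ]
  simp only [smul_eq_mul, neg_smul, Complex.real_smul]
  push_cast
  ring

end CBC

set_option maxHeartbeats 1600000 in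
/-- Exact commutator identity between multiplication by the coordinate `x_ℓ` and the
Bessel potential `⟨D⟩^s`:  `x_ℓ ⟨D⟩^s f − ⟨D⟩^s(y_ℓ f) = s ⟨D⟩^{s-2} ∂_ℓ f`. -/
theorem coordinate_bessel_commutator (s : ℝ) (ℓ : Fin 2) (f : SchwartzMap E2 ℂ) (x : E2) :
    (x ℓ : ℂ) * besselD s (⇑f) x - besselD s (fun y => (y ℓ : ℂ) * f y) x
      = (s : ℂ) * besselD (s - 2) (pd ℓ ⇑f) x := by
  classical
  set e : E2 := EuclideanSpace.single ℓ 1 with he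
  set g : 𝓢(E2, ℂ) := SchwartzMap.fourierTransformCLM ℂ f with hgdef
  have hg : (⇑g : E2 → ℂ) = 𝓕 ⇑f := rfl
  set g' : 𝓢(E2, E2 →L[ℝ] ℂ) := SchwartzMap.fderivCLM ℝ E2 ℂ g with hg'def
  have hg'c : ∀ ξ, g' ξ = fderiv ℝ (𝓕 ⇑f) ξ := fun ξ => SchwartzMap.fderivCLM_apply ℝ g ξ
  set Hs : E2 → ℂ := fun ξ => ((CBC.m s ξ : ℝ) : ℂ) * 𝓕 (⇑f) ξ with hHs
  set P : E2 → ℂ := fun ξ => ((CBC.m s ξ : ℝ) : ℂ) * 𝓕 (fun y : E2 => (y ℓ : ℂ) * f y) ξ with hPd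
  set Q : E2 → ℂ := fun ξ => ((CBC.m (s - 2) ξ : ℝ) : ℂ) * 𝓕 (pd ℓ ⇑f) ξ with hQd
  set A : E2 → (E2 →L[ℝ] ℂ) := fun ξ => ((CBC.m s ξ : ℝ) : ℂ) • fderiv ℝ (𝓕 ⇑f) ξ with hAd
  set B : E2 → (E2 →L[ℝ] ℂ) := fun ξ => (𝓕 ⇑f ξ) •
    (Complex.ofRealCLM.comp ((4 * π ^ 2 * s * CBC.m (s - 2) ξ) • innerSL ℝ ξ)) with hBd
  -- derivative of Hs
  have hDf : ∀ ξ, HasFDerivAt Hs (A ξ + B ξ) ξ := by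
    intro ξ
    have hc : HasFDerivAt (fun ξ : E2 => ((CBC.m s ξ : ℝ) : ℂ))
        (Complex.ofRealCLM.comp ((4 * π ^ 2 * s * CBC.m (s - 2) ξ) • innerSL ℝ ξ)) ξ :=
      (Complex.ofRealCLM.hasFDerivAt).comp ξ (CBC.m_hasFDerivAt s ξ)
    have hd : HasFDerivAt (𝓕 ⇑f) (fderiv ℝ (𝓕 ⇑f) ξ) ξ := by
      rw [← hg]
      exact (g.differentiable ξ).hasFDerivAt
    exact hc.mul hd
  have hfd : fderiv ℝ Hs = fun ξ => A ξ + B ξ := funext fun ξ => (hDf ξ).fderiv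
  have hdiff : Differentiable ℝ Hs := fun ξ => (hDf ξ).differentiableAt
  -- integrability facts
  have hmcont : ∀ t : ℝ, Continuous fun ξ : E2 => ((CBC.m t ξ : ℝ) : ℂ) :=
    fun t => Complex.continuous_ofReal.comp (CBC.m_continuous t)
  have hnorm_m : ∀ (t : ℝ) (ξ : E2), ‖((CBC.m t ξ : ℝ) : ℂ)‖ = CBC.m t ξ := by
    intro t ξ
    rw [Complex.norm_real, Real.norm_eq_abs, _root_.abs_of_nonneg (CBC.m_pos t ξ).le]
  have hgcont : Continuous (𝓕 ⇑f) := by rw [← hg]; exact g.continuous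
  have hg'cont : Continuous fun ξ : E2 => fderiv ℝ (𝓕 ⇑f) ξ := by
    have : (fun ξ : E2 => fderiv ℝ (𝓕 ⇑f) ξ) = ⇑g' := funext fun ξ => (hg'c ξ).symm
    rw [this]; exact g'.continuous
  have hA : Integrable A volume := by
    refine CBC.integrable_of_le s 0 g' 1 (((hmcont s).smul hg'cont).aestronglyMeasurable) ?_
    intro ξ
    simp only [hAd]
    rw [norm_smul (((CBC.m s ξ : ℝ) : ℂ)) (fderiv ℝ (𝓕 ⇑f) ξ), hnorm_m, ← hg'c ξ]
    simp
  have hB : Integrable B volume := by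
    refine CBC.integrable_of_le (s - 2) 1 g (4 * π ^ 2 * |s|)
      ((hgcont.smul (continuous_const.clm_comp
        ((continuous_const.mul (CBC.m_continuous (s - 2))).smul
          (innerSL ℝ).continuous))).aestronglyMeasurable) ?_
    intro ξ
    have h1 : ‖B ξ‖ ≤ ‖𝓕 ⇑f ξ‖ *
        (|4 * π ^ 2 * s * CBC.m (s - 2) ξ| * ‖ξ‖) := by
      simp only [hBd]
      refine ContinuousLinearMap.opNorm_le_bound _ (by positivity) fun y => ?_
      simp only [ContinuousLinearMap.smul_apply, ContinuousLinearMap.comp_apply,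
        ContinuousLinearMap.coe_smul', Pi.smul_apply, Complex.ofRealCLM_apply,
        smul_eq_mul, innerSL_apply_apply]
      rw [norm_mul, Complex.norm_real, Real.norm_eq_abs, abs_mul]
      calc ‖𝓕 (⇑f) ξ‖ * (|4 * π ^ 2 * s * CBC.m (s - 2) ξ| * |(inner ℝ ξ y : ℝ)|)
          ≤ ‖𝓕 (⇑f) ξ‖ * (|4 * π ^ 2 * s * CBC.m (s - 2) ξ| * (‖ξ‖ * ‖y‖)) := by
            gcongr
            exact abs_real_inner_le_norm ξ y
        _ = ‖𝓕 (⇑f) ξ‖ * (|4 * π ^ 2 * s * CBC.m (s - 2) ξ| * ‖ξ‖) * ‖y‖ := by ring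
    refine h1.trans ?_
    have habs : |4 * π ^ 2 * s * CBC.m (s - 2) ξ| = 4 * π ^ 2 * |s| * CBC.m (s - 2) ξ := by
      rw [abs_mul, abs_mul, _root_.abs_of_nonneg (by positivity : (0:ℝ) ≤ 4 * π ^ 2),
        _root_.abs_of_nonneg (CBC.m_pos (s - 2) ξ).le]
    rw [habs, pow_one]
    have hgg : ‖g ξ‖ = ‖𝓕 (⇑f) ξ‖ := rfl
    rw [hgg]
    have h2 : ‖ξ‖ ≤ 1 + ‖ξ‖ := by linarith [norm_nonneg ξ]
    nlinarith [norm_nonneg (𝓕 ⇑f ξ), (CBC.m_pos (s - 2) ξ).le, norm_nonneg ξ,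
      mul_nonneg (mul_nonneg (by positivity : (0:ℝ) ≤ 4 * π ^ 2 * |s|) (CBC.m_pos (s - 2) ξ).le)
        (norm_nonneg (𝓕 ⇑f ξ))]
  have hHsInt : Integrable Hs volume := by
    refine CBC.integrable_of_le s 0 g 1 (((hmcont s).mul hgcont).aestronglyMeasurable) ?_
    intro ξ
    simp only [hHs]
    rw [norm_mul, hnorm_m]
    simp [hg]
  have hInt' : Integrable (fderiv ℝ Hs) volume := by rw [hfd]; exact Integrable.add (ε' := E2 →L[ℝ] ℂ) hA hB
  have h2pi : (-(2 * (π : ℂ) * Complex.I)) ≠ 0 := by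
    simp [Real.pi_ne_zero, Complex.I_ne_zero, Complex.ofReal_ne_zero]
  -- pointwise formula for directional derivative
  have hcoord : ∀ ξ : E2, fderiv ℝ (𝓕 ⇑f) ξ e
      = (-(2 * (π:ℂ) * Complex.I)) * 𝓕 (fun v => (v ℓ : ℂ) * f v) ξ := by
    intro ξ
    rw [he]
    exact CBC.fourier_coord f ℓ ξ
  have hpd : ∀ ξ : E2, 𝓕 (pd ℓ ⇑f) ξ = (2 * (π:ℂ) * Complex.I) * ((ξ ℓ : ℂ) * 𝓕 ⇑f ξ) := by
    intro ξ
    exact CBC.fourier_pd f ℓ ξ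
  have hpoint : ∀ ξ : E2, fderiv ℝ Hs ξ e
      = (-(2 * (π:ℂ) * Complex.I)) * (P ξ + (s : ℂ) * Q ξ) := by
    intro ξ
    rw [hfd]
    show (A ξ + B ξ) e = _
    simp only [hAd, hBd, ContinuousLinearMap.add_apply, ContinuousLinearMap.smul_apply,
      ContinuousLinearMap.coe_smul', ContinuousLinearMap.comp_apply, Pi.smul_apply]
    rw [Complex.ofRealCLM_apply, hcoord ξ]
    rw [innerSL_apply_apply, he, CBC.inner_coord]
    simp only [hPd, hQd]
    rw [hpd ξ]
    simp only [smul_eq_mul, Complex.real_smul]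
    push_cast
    linear_combination (4 * (π:ℂ)^2 * (s:ℂ) * ((CBC.m (s - 2) ξ : ℝ) : ℂ) * ((ξ ℓ : ℝ) : ℂ)
      * (𝓕 (⇑f) ξ)) * Complex.I_sq
  -- integrability of P and Q
  have hPint : Integrable P volume := by
    have hPeq : P = fun ξ => ((CBC.m s ξ : ℝ) : ℂ) *
        ((-(2 * (π:ℂ) * Complex.I))⁻¹ * fderiv ℝ (𝓕 ⇑f) ξ e) := by
      funext ξ
      rw [hcoord ξ, inv_mul_cancel_left₀ h2pi]
    rw [hPeq]
    refine CBC.integrable_of_le s 0 g' ((2 * π)⁻¹)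
      (((hmcont s).mul (continuous_const.mul
        (hg'cont.clm_apply continuous_const))).aestronglyMeasurable) ?_
    intro ξ
    beta_reduce
    rw [norm_mul, hnorm_m, norm_mul]
    have hni : ‖(-(2 * (π:ℂ) * Complex.I))⁻¹‖ = (2 * π)⁻¹ := by
      rw [norm_inv, norm_neg]
      simp [_root_.abs_of_nonneg Real.pi_pos.le]
    rw [hni]
    have hev : ‖fderiv ℝ (𝓕 ⇑f) ξ e‖ ≤ ‖g' ξ‖ := by
      rw [← hg'c ξ]
      calc ‖g' ξ e‖ ≤ ‖g' ξ‖ * ‖e‖ := (g' ξ).le_opNorm e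
        _ = ‖g' ξ‖ := by rw [he, EuclideanSpace.norm_single, norm_one, mul_one]
    calc CBC.m s ξ * ((2 * π)⁻¹ * ‖fderiv ℝ (𝓕 ⇑f) ξ e‖)
        ≤ CBC.m s ξ * ((2 * π)⁻¹ * ‖g' ξ‖) := by
          gcongr
          exact (CBC.m_pos s ξ).le
      _ = (2 * π)⁻¹ * (CBC.m s ξ * ((1 + ‖ξ‖) ^ 0 * ‖g' ξ‖)) := by rw [pow_zero]; ring
  have hQint : Integrable Q volume := by
    have hQeq : Q = fun ξ => ((CBC.m (s - 2) ξ : ℝ) : ℂ) *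
        ((2 * (π:ℂ) * Complex.I) * ((ξ ℓ : ℂ) * 𝓕 ⇑f ξ)) := by
      funext ξ
      simp only [hQd]
      rw [hpd ξ]
    rw [hQeq]
    refine CBC.integrable_of_le (s - 2) 1 g (2 * π)
      (((hmcont (s - 2)).mul (continuous_const.mul
        ((Complex.continuous_ofReal.comp (EuclideanSpace.proj ℓ :
          E2 →L[ℝ] ℝ).continuous).mul hgcont))).aestronglyMeasurable) ?_
    intro ξ
    beta_reduce
    have hnq : ‖((CBC.m (s - 2) ξ : ℝ) : ℂ) *
        (2 * (π:ℂ) * Complex.I * ((ξ ℓ : ℂ) * 𝓕 (⇑f) ξ))‖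
        = CBC.m (s - 2) ξ * (2 * π * (|ξ ℓ| * ‖𝓕 (⇑f) ξ‖)) := by
      simp only [norm_mul, Complex.norm_real, Complex.norm_I, Real.norm_eq_abs,
        Complex.norm_ofNat, _root_.abs_of_nonneg Real.pi_pos.le,
        _root_.abs_of_nonneg (CBC.m_pos (s - 2) ξ).le]
      ring
    rw [hnq, pow_one]
    have h3 : |ξ ℓ| ≤ 1 + ‖ξ‖ := (CBC.abs_coord_le ξ ℓ).trans (by linarith [norm_nonneg ξ])
    have hgn : (0:ℝ) ≤ ‖𝓕 (⇑f) ξ‖ := norm_nonneg _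
    have hmn : (0:ℝ) ≤ CBC.m (s - 2) ξ := (CBC.m_pos (s - 2) ξ).le
    have hgg : ‖g ξ‖ = ‖𝓕 (⇑f) ξ‖ := rfl
    rw [hgg]
    nlinarith [mul_nonneg (mul_nonneg (mul_nonneg (by positivity : (0:ℝ) ≤ 2 * π) hmn) hgn)
      (sub_nonneg.2 h3)]
  -- the key Fourier identity
  have key1 : 𝓕 (fun ξ : E2 => fderiv ℝ Hs ξ e) (-x)
      = (-(2 * (π:ℂ) * Complex.I)) * ((x ℓ : ℂ) * 𝓕 Hs (-x)) := by
    rw [← Real.fourier_continuousLinearMap_apply hInt']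
    rw [Real.fourier_fderiv hHsInt hdiff hInt']
    rw [VectorFourier.fourierSMulRight_apply]
    simp only [ContinuousLinearMap.neg_apply, innerSL_apply_apply]
    rw [he, show (innerSL ℝ) (-x) (EuclideanSpace.single ℓ 1) = (-x) ℓ from CBC.inner_coord (-x) ℓ]
    have hneg : (-x : E2) ℓ = -(x ℓ) := rfl
    rw [hneg]
    simp only [smul_eq_mul, neg_smul, Complex.real_smul, neg_neg]
    try push_cast
    try ring
  have key2 : 𝓕 (fun ξ : E2 => fderiv ℝ Hs ξ e) (-x)
      = (-(2 * (π:ℂ) * Complex.I)) * (𝓕 P (-x) + (s : ℂ) * 𝓕 Q (-x)) := by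
    have heq : (fun ξ : E2 => fderiv ℝ Hs ξ e)
        = fun ξ => (-(2 * (π:ℂ) * Complex.I)) * (P ξ + (s : ℂ) * Q ξ) := funext hpoint
    rw [heq, CBC.F_const_mul]
    rw [CBC.F_add hPint (hQint.const_mul ((s : ℂ)))]
    rw [CBC.F_const_mul]
  have key := mul_left_cancel₀ h2pi (key1.symm.trans key2)
  have hb1 : besselD s ⇑f x = 𝓕 Hs (-x) := by
    rw [show besselD s ⇑f = 𝓕⁻ Hs from rfl, Real.fourierInv_eq_fourier_neg]
  have hb2 : besselD s (fun y => (y ℓ : ℂ) * f y) x = 𝓕 P (-x) := by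
    rw [show besselD s (fun y => (y ℓ : ℂ) * f y) = 𝓕⁻ P from rfl,
      Real.fourierInv_eq_fourier_neg]
  have hb3 : besselD (s - 2) (pd ℓ ⇑f) x = 𝓕 Q (-x) := by
    rw [show besselD (s - 2) (pd ℓ ⇑f) = 𝓕⁻ Q from rfl,
      Real.fourierInv_eq_fourier_neg]
  rw [hb1, hb2, hb3]
  linear_combination key

end
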